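/- Let (V,E) be a directed tree, λ and μ weights on V, and 1 ≤ p < ∞. The weighted forward shift S_λ, defined by (S_λ f)(v) = λ_v f(par(v)) for v ≠ root and (S_λ f)(root) = 0, is a bounded operator on ℓ^p(V,μ) if and only if there is M > 0 such that for all v ∈ V, ∑_{u ∈ Chi(v)} |λ_u μ_u|^p ≤ M |μ_v|^p. In that case ‖S_λ‖ = sup_{v∈V} (1/|μ_v|) (∑_{u∈Chi(v)} |λ_u μ_u|^p)^{1/p}. -/

import Mathlib

open scoped ENNReal
open Filter

/-- Iterated parent map of a partially defined parent function. -/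
def parIter {V : Type*} (par : V → Option V) : ℕ → V → Option V
  | 0, v => some v
  | n + 1, v => (par v).bind (parIter par n)

/-- A directed tree: each vertex has at most one parent (the map `par`),
the graph is connected (any two vertices have a common ancestor), and has no cycles. -/
structure DirTree (V : Type*) : Type _ where
  par : V → Option V
  connected : ∀ u v : V, ∃ m n : ℕ, ∃ w : V,
    parIter par m u = some w ∧ parIter par n v = some w
  acyclic : ∀ (v : V) (n : ℕ), parIter par (n + 1) v ≠ some v

namespace DirTree

variable {V : Type*} (t : DirTree V)

/-- The set of children of a vertex. -/
def children (v : V) : Set V := {u | t.par u = some v}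

/-- `desc n v` is `Chi^n(v)`, the set of `n`-th generation descendants of `v`. -/
def desc (n : ℕ) (v : V) : Set V := {u | parIter t.par n u = some v}

def IsRoot (v : V) : Prop := t.par v = none

def Rooted : Prop := ∃ v, t.IsRoot v

def Unrooted : Prop := ∀ v : V, t.par v ≠ none

/-- The tree has no leaves: every vertex has a child. -/
def Leafless : Prop := ∀ v : V, ∃ u, t.par u = some v

variable {𝕂 : Type*} [RCLike 𝕂]

/-- The weighted backward shift `B_λ`: `(B_λ f)(v) = ∑_{u ∈ Chi(v)} λ_u f(u)`. -/
noncomputable def bshift (lam : V → 𝕂) (f : V → 𝕂) : V → 𝕂 :=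
  fun v => ∑' u : t.children v, lam u * f u

/-- The weighted forward shift `S_λ`: `(S_λ f)(v) = λ_v f(par v)` for `v ≠ root`, `0` at the root. -/
noncomputable def fshift (lam : V → 𝕂) (f : V → 𝕂) : V → 𝕂 :=
  fun v => (t.par v).elim 0 (fun w => lam v * f w)

/-- `wprod lam n u = λ(par^n(u) → u)`, the product of the weights along the branch
from `par^n(u)` down to `u`. -/
noncomputable def wprod (lam : V → 𝕂) (n : ℕ) (u : V) : 𝕂 :=
  ∏ k ∈ Finset.range n, ((parIter t.par k u).elim 1 lam)

end DirTree

/-- The `ℓ^p(V,μ)`-norm (with values in `ℝ≥0∞`): for `p = ∞` the weighted sup norm,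
otherwise `(∑_v ‖f(v) μ_v‖^p)^{1/p}`. -/
noncomputable def enormW {V 𝕂 : Type*} [RCLike 𝕂] (μ : V → 𝕂) (p : ℝ≥0∞) (f : V → 𝕂) :
    ℝ≥0∞ :=
  if p = ∞ then ⨆ v, (‖μ v * f v‖₊ : ℝ≥0∞)
  else (∑' v, (‖μ v * f v‖₊ : ℝ≥0∞) ^ p.toReal) ^ (1 / p.toReal)

/-- Membership in `ℓ^p(V,μ)`. -/
def MemWLp {V 𝕂 : Type*} [RCLike 𝕂] (μ : V → 𝕂) (p : ℝ≥0∞) (f : V → 𝕂) : Prop :=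
  enormW μ p f ≠ ∞

/-- Membership in `c₀(V,μ)`: the weighted function vanishes at infinity. -/
def MemC0 {V 𝕂 : Type*} [RCLike 𝕂] (μ : V → 𝕂) (f : V → 𝕂) : Prop :=
  Tendsto (fun v => ‖μ v * f v‖) cofinite (nhds 0)

/-- `T` is a bounded operator with respect to the norm `nrm`. -/
def BoundedOn {V 𝕂 : Type*} [RCLike 𝕂] (T : (V → 𝕂) → (V → 𝕂))
    (nrm : (V → 𝕂) → ℝ≥0∞) : Prop :=
  ∃ C : ℝ≥0∞, C ≠ ∞ ∧ ∀ f, nrm (T f) ≤ C * nrm f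

/-- The operator norm of `T` with respect to the norm `nrm`. -/
noncomputable def opNorm {V 𝕂 : Type*} [RCLike 𝕂] (T : (V → 𝕂) → (V → 𝕂))
    (nrm : (V → 𝕂) → ℝ≥0∞) : ℝ≥0∞ :=
  sInf {C : ℝ≥0∞ | ∀ f, nrm (T f) ≤ C * nrm f}

/-- `T` is hypercyclic on the space `{f | mem f}` with metric induced by `nrm`:
some `f` in the space has dense orbit. -/
def HypercyclicOn {V 𝕂 : Type*} [RCLike 𝕂] (T : (V → 𝕂) → (V → 𝕂))
    (mem : (V → 𝕂) → Prop) (nrm : (V → 𝕂) → ℝ≥0∞) : Prop :=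
  ∃ f, mem f ∧ ∀ g, mem g → ∀ ε : ℝ≥0∞, 0 < ε → ∃ n : ℕ, nrm (T^[n] f - g) < ε

/-- `T` is weakly mixing: `T ⊕ T` is hypercyclic on the product. -/
def WeaklyMixingOn {V 𝕂 : Type*} [RCLike 𝕂] (T : (V → 𝕂) → (V → 𝕂))
    (mem : (V → 𝕂) → Prop) (nrm : (V → 𝕂) → ℝ≥0∞) : Prop :=
  ∃ f₁ f₂, mem f₁ ∧ mem f₂ ∧ ∀ g₁ g₂, mem g₁ → mem g₂ → ∀ ε : ℝ≥0∞, 0 < ε →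
    ∃ n : ℕ, nrm (T^[n] f₁ - g₁) < ε ∧ nrm (T^[n] f₂ - g₂) < ε

/-- `T` is (topologically) mixing on the space `{f | mem f}`. -/
def MixingOn {V 𝕂 : Type*} [RCLike 𝕂] (T : (V → 𝕂) → (V → 𝕂))
    (mem : (V → 𝕂) → Prop) (nrm : (V → 𝕂) → ℝ≥0∞) : Prop :=
  ∀ f g, mem f → mem g → ∀ ε : ℝ≥0∞, 0 < ε →
    ∃ N : ℕ, ∀ n ≥ N, ∃ h, mem h ∧ nrm (h - f) < ε ∧ nrm (T^[n] h - g) < ε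


lemma fshift_sum_aux {V : Type*} {𝕂 : Type*} [RCLike 𝕂] (t : DirTree V)
    (lam μ : V → 𝕂) {q : ℝ} (hq : 0 < q) (f : V → 𝕂) :
    ∑' v, (‖μ v * t.fshift lam f v‖₊ : ℝ≥0∞) ^ q
      = ∑' w, (∑' u : t.children w, (‖lam u.1 * μ u.1‖₊ : ℝ≥0∞) ^ q)
          * (‖f w‖₊ : ℝ≥0∞) ^ q := by
  classical
  have key : ∀ v, (‖μ v * t.fshift lam f v‖₊ : ℝ≥0∞) ^ q
      = ∑' w : V, (if t.par v = some w then
          (‖lam v * μ v‖₊ : ℝ≥0∞) ^ q * (‖f w‖₊ : ℝ≥0∞) ^ q else 0) := by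
    intro v
    unfold DirTree.fshift
    cases h : t.par v with
    | none =>
      simp [h, ENNReal.zero_rpow_of_pos hq]
    | some w0 =>
      rw [tsum_eq_single w0 (fun b hb => by simp [h, Ne.symm hb])]
      simp only [h, Option.elim_some, if_true, if_pos trivial]
      rw [show μ v * (lam v * f w0) = (lam v * μ v) * f w0 by ring, nnnorm_mul,
        ENNReal.coe_mul, ENNReal.mul_rpow_of_nonneg _ _ hq.le]
  rw [tsum_congr key, ENNReal.tsum_comm]
  refine tsum_congr fun w => ?_
  rw [← ENNReal.tsum_mul_right, tsum_subtype (t.children w)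
    (fun u => (‖lam u * μ u‖₊ : ℝ≥0∞) ^ q * (‖f w‖₊ : ℝ≥0∞) ^ q)]
  refine tsum_congr fun v => ?_
  by_cases hv : t.par v = some w
  · rw [if_pos hv, Set.indicator_of_mem (by exact hv)]
  · rw [if_neg hv, Set.indicator_of_notMem (by exact hv)]

/-- the weighted forward shift `S_λ` is bounded on `ℓ^p(V,μ)`, `1 ≤ p < ∞`,
iff there is `M > 0` with `∑_{u ∈ Chi(v)} |λ_u μ_u|^p ≤ M |μ_v|^p` for all `v`; in that
case `‖S_λ‖ = sup_v |μ_v|⁻¹ (∑_{u ∈ Chi(v)} |λ_u μ_u|^p)^{1/p}`. -/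
theorem stmt3 {V : Type*} [Countable V] {𝕂 : Type*} [RCLike 𝕂] (t : DirTree V)
    (lam μ : V → 𝕂) (hlam : ∀ v, lam v ≠ 0) (hμ : ∀ v, μ v ≠ 0)
    (p : ℝ≥0∞) (hp : 1 ≤ p) (hp' : p ≠ ∞) :
    (BoundedOn (t.fshift lam) (enormW μ p) ↔
      ∃ M : ℝ, 0 < M ∧ ∀ v : V,
        (∑' u : t.children v, (‖lam u.1 * μ u.1‖₊ : ℝ≥0∞) ^ p.toReal)
          ≤ ENNReal.ofReal M * (‖μ v‖₊ : ℝ≥0∞) ^ p.toReal) ∧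
    (BoundedOn (t.fshift lam) (enormW μ p) →
      opNorm (t.fshift lam) (enormW μ p)
        = ⨆ v : V, (‖μ v‖₊ : ℝ≥0∞)⁻¹ *
            (∑' u : t.children v, (‖lam u.1 * μ u.1‖₊ : ℝ≥0∞) ^ p.toReal)
              ^ (1 / p.toReal)) := by
  classical
  set q := p.toReal with hqdef
  have hq1 : 1 ≤ q := by
    rw [hqdef, ← ENNReal.toReal_one]
    exact (ENNReal.toReal_le_toReal ENNReal.one_ne_top hp').mpr hp
  have hq0 : 0 < q := lt_of_lt_of_le one_pos hq1
  have hqq : q * (1 / q) = 1 := mul_one_div_cancel hq0.ne'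
  have hqq' : (1 / q) * q = 1 := by rw [mul_comm]; exact hqq
  set Sv : V → ℝ≥0∞ :=
    fun w => ∑' u : t.children w, (‖lam u.1 * μ u.1‖₊ : ℝ≥0∞) ^ q with hSv
  have hμ0 : ∀ w, (‖μ w‖₊ : ℝ≥0∞) ≠ 0 := fun w => by
    simp [nnnorm_eq_zero, hμ w]
  have hμtop : ∀ w, (‖μ w‖₊ : ℝ≥0∞) ≠ ∞ := fun w => ENNReal.coe_ne_top
  have hμq0 : ∀ w, (‖μ w‖₊ : ℝ≥0∞) ^ q ≠ 0 := fun w =>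
    (ENNReal.rpow_pos (lt_of_le_of_ne zero_le (Ne.symm (hμ0 w))) (hμtop w)).ne'
  have hμqtop : ∀ w, (‖μ w‖₊ : ℝ≥0∞) ^ q ≠ ∞ := fun w =>
    ENNReal.rpow_ne_top_of_nonneg hq0.le (hμtop w)
  have hnorm : ∀ f : V → 𝕂,
      enormW μ p f = (∑' v, (‖μ v * f v‖₊ : ℝ≥0∞) ^ q) ^ (1 / q) := by
    intro f; simp [enormW, hp', hqdef]
  have hA : ∀ f : V → 𝕂,
      ∑' v, (‖μ v * t.fshift lam f v‖₊ : ℝ≥0∞) ^ q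
        = ∑' w, Sv w * (‖f w‖₊ : ℝ≥0∞) ^ q :=
    fun f => fshift_sum_aux t lam μ hq0 f
  -- delta functions
  set δ : V → V → 𝕂 := fun w v => if v = w then 1 else 0 with hδdef
  have hδ1 : ∀ w, ∑' v, (‖μ v * δ w v‖₊ : ℝ≥0∞) ^ q = (‖μ w‖₊ : ℝ≥0∞) ^ q := by
    intro w
    rw [tsum_eq_single w (fun b hb => by
      simp [hδdef, hb, ENNReal.zero_rpow_of_pos hq0])]
    simp [hδdef]
  have hδ2 : ∀ (w : V) (g : V → ℝ≥0∞),
      ∑' w', g w' * (‖δ w w'‖₊ : ℝ≥0∞) ^ q = g w := by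
    intro w g
    rw [tsum_eq_single w (fun b hb => by
      simp [hδdef, hb, ENNReal.zero_rpow_of_pos hq0])]
    simp [hδdef]
  -- testing on delta functions
  have htest : ∀ C : ℝ≥0∞, (∀ f, enormW μ p (t.fshift lam f) ≤ C * enormW μ p f) →
      ∀ w, Sv w ^ (1 / q) ≤ C * (‖μ w‖₊ : ℝ≥0∞) := by
    intro C hC w
    have h := hC (δ w)
    rw [hnorm, hnorm, hA, hδ2 w Sv, hδ1 w, ← ENNReal.rpow_mul, hqq,
      ENNReal.rpow_one] at h
    exact h
  -- bound from the children sums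
  have hbound : ∀ C : ℝ≥0∞, (∀ w, Sv w ≤ C ^ q * (‖μ w‖₊ : ℝ≥0∞) ^ q) →
      ∀ f, enormW μ p (t.fshift lam f) ≤ C * enormW μ p f := by
    intro C hC f
    rw [hnorm, hnorm, hA]
    have step1 : ∑' w, Sv w * (‖f w‖₊ : ℝ≥0∞) ^ q
        ≤ C ^ q * ∑' w, (‖μ w * f w‖₊ : ℝ≥0∞) ^ q := by
      rw [← ENNReal.tsum_mul_left]
      refine ENNReal.tsum_le_tsum fun w => ?_
      rw [nnnorm_mul, ENNReal.coe_mul, ENNReal.mul_rpow_of_nonneg _ _ hq0.le,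
        ← mul_assoc]
      exact mul_le_mul_left (hC w) _
    calc (∑' w, Sv w * (‖f w‖₊ : ℝ≥0∞) ^ q) ^ (1 / q)
        ≤ (C ^ q * ∑' w, (‖μ w * f w‖₊ : ℝ≥0∞) ^ q) ^ (1 / q) :=
          ENNReal.rpow_le_rpow step1 (by positivity)
      _ = C * (∑' w, (‖μ w * f w‖₊ : ℝ≥0∞) ^ q) ^ (1 / q) := by
          rw [ENNReal.mul_rpow_of_nonneg _ _ (by positivity : (0:ℝ) ≤ 1 / q),
            ← ENNReal.rpow_mul, hqq, ENNReal.rpow_one]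
  constructor
  · constructor
    · rintro ⟨C, hCtop, hC⟩
      have hCq : C ^ q ≠ ∞ := ENNReal.rpow_ne_top_of_nonneg hq0.le hCtop
      refine ⟨max 1 (C ^ q).toReal, lt_of_lt_of_le one_pos (le_max_left _ _),
        fun w => ?_⟩
      have h1 : Sv w ^ (1 / q) ≤ C * (‖μ w‖₊ : ℝ≥0∞) := htest C hC w
      have h2 : Sv w ≤ C ^ q * (‖μ w‖₊ : ℝ≥0∞) ^ q := by
        have := ENNReal.rpow_le_rpow h1 hq0.le
        rwa [← ENNReal.rpow_mul, hqq', ENNReal.rpow_one,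
          ENNReal.mul_rpow_of_nonneg _ _ hq0.le] at this
      refine h2.trans (mul_le_mul_left ?_ _)
      calc C ^ q = ENNReal.ofReal (C ^ q).toReal := (ENNReal.ofReal_toReal hCq).symm
        _ ≤ ENNReal.ofReal (max 1 (C ^ q).toReal) :=
            ENNReal.ofReal_le_ofReal (le_max_right _ _)
    · rintro ⟨M, hM, hC⟩
      refine ⟨(ENNReal.ofReal M) ^ (1 / q), ?_, hbound _ fun w => ?_⟩
      · exact ENNReal.rpow_ne_top_of_nonneg (by positivity) ENNReal.ofReal_ne_top
      · rw [← ENNReal.rpow_mul, hqq', ENNReal.rpow_one]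
        exact hC w
  · intro _
    set K : ℝ≥0∞ := ⨆ v : V, (‖μ v‖₊ : ℝ≥0∞)⁻¹ * Sv v ^ (1 / q) with hK
    have hKmem : ∀ f, enormW μ p (t.fshift lam f) ≤ K * enormW μ p f := by
      refine hbound K fun w => ?_
      have h1 : (‖μ w‖₊ : ℝ≥0∞)⁻¹ * Sv w ^ (1 / q) ≤ K :=
        le_iSup (fun v : V => (‖μ v‖₊ : ℝ≥0∞)⁻¹ * Sv v ^ (1 / q)) w
      have h2 : ((‖μ w‖₊ : ℝ≥0∞) ^ q)⁻¹ * Sv w ≤ K ^ q := by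
        have := ENNReal.rpow_le_rpow h1 hq0.le
        rwa [ENNReal.mul_rpow_of_nonneg _ _ hq0.le, ENNReal.inv_rpow,
          ← ENNReal.rpow_mul, hqq', ENNReal.rpow_one] at this
      calc Sv w = (‖μ w‖₊ : ℝ≥0∞) ^ q * (((‖μ w‖₊ : ℝ≥0∞) ^ q)⁻¹ * Sv w) := by
            rw [← mul_assoc, ENNReal.mul_inv_cancel (hμq0 w) (hμqtop w), one_mul]
        _ ≤ (‖μ w‖₊ : ℝ≥0∞) ^ q * K ^ q := mul_le_mul_right h2 _
        _ = K ^ q * (‖μ w‖₊ : ℝ≥0∞) ^ q := mul_comm _ _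
    refine le_antisymm (sInf_le hKmem) (le_sInf fun C hC => ?_)
    refine iSup_le fun w => ?_
    have h1 : Sv w ^ (1 / q) ≤ C * (‖μ w‖₊ : ℝ≥0∞) := htest C hC w
    calc (‖μ w‖₊ : ℝ≥0∞)⁻¹ * Sv w ^ (1 / q)
        ≤ (‖μ w‖₊ : ℝ≥0∞)⁻¹ * (C * (‖μ w‖₊ : ℝ≥0∞)) := mul_le_mul_right h1 _
      _ = C * ((‖μ w‖₊ : ℝ≥0∞)⁻¹ * (‖μ w‖₊ : ℝ≥0∞)) := by ring
      _ = C := by rw [ENNReal.inv_mul_cancel (hμ0 w) (hμtop w), mul_one]
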